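/- (Descending Landen transformation of the elliptic modulus.) For 0 < q < 1 define θ₂(q) = Σ_{n∈ℤ} q^{(n+1/2)²}, θ₃(q) = Σ_{n∈ℤ} q^{n²}, and the elliptic modulus k(q) = θ₂(q)²/θ₃(q)². Then 0 ≤ k(q) ≤ 1 and k(q²) · ( 1 + √(1 − k(q)²) ) = 1 − √(1 − k(q)²). -/

import Mathlib

/-- The theta constant `θ₂(q) = Σ_{n∈ℤ} q^{(n+1/2)²}`. -/
noncomputable def theta2 (q : ℝ) : ℝ := ∑' n : ℤ, q ^ (((n : ℝ) + 1 / 2) ^ 2)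

/-- The theta constant `θ₃(q) = Σ_{n∈ℤ} q^{n²}`. -/
noncomputable def theta3 (q : ℝ) : ℝ := ∑' n : ℤ, q ^ ((n : ℝ) ^ 2)

/-- The elliptic modulus `k(q) = θ₂(q)²/θ₃(q)²`. -/
noncomputable def ellipticModulus (q : ℝ) : ℝ := theta2 q ^ 2 / theta3 q ^ 2


lemma summable_theta_term {q : ℝ} (hq0 : 0 < q) (hq1 : q < 1) {c : ℝ} (hc0 : 0 ≤ c)
    (hc1 : c ≤ 1) : Summable (fun n : ℤ => q ^ (((n : ℝ) + c) ^ 2)) := by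
  have hb : Summable (fun n : ℤ => q⁻¹ * q ^ (n.natAbs : ℕ)) := by
    refine Summable.mul_left _ ?_
    refine Summable.of_nat_of_neg ?_ ?_ <;>
      simpa using summable_geometric_of_lt_one hq0.le hq1
  refine Summable.of_nonneg_of_le (fun n => (Real.rpow_pos_of_pos hq0 _).le) (fun n => ?_) hb
  have hexp : (n.natAbs : ℝ) - 1 ≤ ((n : ℝ) + c) ^ 2 := by
    rcases le_or_gt 0 n with hn | hn
    · have h1 : (n.natAbs : ℝ) = (n : ℝ) := by
        have h : |n| = n := abs_of_nonneg hn
        rw [Nat.cast_natAbs]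
        exact_mod_cast h
      rw [h1]
      nlinarith [sq_nonneg ((n : ℝ) + c - 1), mul_nonneg (Int.cast_nonneg_iff.mpr hn) hc0]
    · have h1 : (n.natAbs : ℝ) = -(n : ℝ) := by
        have h : |n| = -n := abs_of_neg hn
        rw [Nat.cast_natAbs]
        exact_mod_cast h
      have hn1 : (n : ℝ) ≤ -1 := by exact_mod_cast (by omega : n ≤ -1)
      have hprodz : (0:ℤ) ≤ (n + 1) * (n + 2) := by
        rcases le_or_gt n (-2) with h | h
        · nlinarith
        · nlinarith
      have hprod : (0:ℝ) ≤ ((n:ℝ) + 1) * ((n:ℝ) + 2) := by exact_mod_cast hprodz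
      rw [h1]
      nlinarith [mul_nonneg (by linarith : (0:ℝ) ≤ 1 - c)
        (by linarith : (0:ℝ) ≤ -(2*(n:ℝ) + c + 1))]
  calc q ^ (((n : ℝ) + c) ^ 2) ≤ q ^ ((n.natAbs : ℝ) - 1) :=
        Real.rpow_le_rpow_of_exponent_ge hq0 hq1.le hexp
    _ = q⁻¹ * q ^ (n.natAbs : ℕ) := by
        rw [Real.rpow_sub hq0, Real.rpow_natCast, Real.rpow_one, div_eq_inv_mul]


lemma hasSum_prod_mul {h₁ h₂ : ℤ → ℝ} {A B : ℝ} (s1 : HasSum h₁ A) (s2 : HasSum h₂ B)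
    (p1 : ∀ n, 0 ≤ h₁ n) (p2 : ∀ n, 0 ≤ h₂ n) :
    HasSum (fun st : ℤ × ℤ => h₁ st.1 * h₂ st.2) (A * B) := by
  have n1 : Summable fun n => ‖h₁ n‖ := by
    simpa [Real.norm_eq_abs, abs_of_nonneg, p1 _] using s1.summable.abs
  have n2 : Summable fun n => ‖h₂ n‖ := by
    simpa [Real.norm_eq_abs, abs_of_nonneg, p2 _] using s2.summable.abs
  have hs := summable_mul_of_summable_norm n1 n2
  rw [← s1.tsum_eq, ← s2.tsum_eq, tsum_mul_tsum_of_summable_norm n1 n2]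
  exact hs.hasSum

/-- The set of pairs with even coordinate sum. -/
def evenSumSet : Set (ℤ × ℤ) := {p | (p.1 + p.2) % 2 = 0}

/-- Parametrization of pairs with even coordinate sum. -/
def landenEquiv0 : ℤ × ℤ ≃ evenSumSet where
  toFun st := ⟨(st.1 + st.2, st.1 - st.2), by simp only [evenSumSet, Set.mem_setOf_eq]; omega⟩
  invFun p := ((p.1.1 + p.1.2) / 2, (p.1.1 - p.1.2) / 2)
  left_inv := by
    rintro ⟨s, t⟩
    simp only [Prod.mk.injEq]
    constructor <;> omega
  right_inv := by
    rintro ⟨⟨m, n⟩, hmn⟩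
    simp only [evenSumSet, Set.mem_setOf_eq] at hmn
    apply Subtype.ext
    simp only [Prod.mk.injEq]
    constructor <;> omega

/-- Parametrization of pairs with odd coordinate sum. -/
def landenEquiv1 : ℤ × ℤ ≃ (evenSumSetᶜ : Set (ℤ × ℤ)) where
  toFun st := ⟨(st.1 + st.2 + 1, st.1 - st.2), by
    simp only [evenSumSet, Set.mem_compl_iff, Set.mem_setOf_eq]; omega⟩
  invFun p := ((p.1.1 + p.1.2 - 1) / 2, (p.1.1 - p.1.2 - 1) / 2)
  left_inv := by
    rintro ⟨s, t⟩
    simp only [Prod.mk.injEq]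
    constructor <;> omega
  right_inv := by
    rintro ⟨⟨m, n⟩, hmn⟩
    simp only [evenSumSet, Set.mem_compl_iff, Set.mem_setOf_eq] at hmn
    apply Subtype.ext
    simp only [Prod.mk.injEq]
    constructor <;> omega

lemma hasSum_split (f : ℤ × ℤ → ℝ) {a b : ℝ}
    (h0 : HasSum (fun st : ℤ × ℤ => f (st.1 + st.2, st.1 - st.2)) a)
    (h1 : HasSum (fun st : ℤ × ℤ => f (st.1 + st.2 + 1, st.1 - st.2)) b) :
    HasSum f (a + b) := by
  have key0 : ((f ∘ ((↑) : evenSumSet → ℤ × ℤ)) ∘ ⇑landenEquiv0) =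
      fun st : ℤ × ℤ => f (st.1 + st.2, st.1 - st.2) := by
    funext st; rfl
  have key1 : ((f ∘ ((↑) : (evenSumSetᶜ : Set (ℤ × ℤ)) → ℤ × ℤ)) ∘ ⇑landenEquiv1) =
      fun st : ℤ × ℤ => f (st.1 + st.2 + 1, st.1 - st.2) := by
    funext st; rfl
  have h0' : HasSum (f ∘ ((↑) : evenSumSet → ℤ × ℤ)) a :=
    landenEquiv0.hasSum_iff.mp (key0 ▸ h0)
  have h1' : HasSum (f ∘ ((↑) : (evenSumSetᶜ : Set (ℤ × ℤ)) → ℤ × ℤ)) b :=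
    landenEquiv1.hasSum_iff.mp (key1 ▸ h1)
  exact h0'.add_compl h1'

set_option maxHeartbeats 1000000
variable {q : ℝ}

lemma hasSum_theta2 (hq0 : 0 < q) (hq1 : q < 1) :
    HasSum (fun n : ℤ => q ^ (((n : ℝ) + 1 / 2) ^ 2)) (theta2 q) :=
  (summable_theta_term hq0 hq1 (by norm_num) (by norm_num)).hasSum

lemma hasSum_theta3 (hq0 : 0 < q) (hq1 : q < 1) :
    HasSum (fun n : ℤ => q ^ ((n : ℝ) ^ 2)) (theta3 q) := by
  have h := (summable_theta_term hq0 hq1 (le_refl 0) zero_le_one).hasSum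
  simpa [theta3] using h

lemma hasSum_theta3_shift (hq0 : 0 < q) (hq1 : q < 1) :
    HasSum (fun n : ℤ => q ^ (((n : ℝ) + 1) ^ 2)) (theta3 q) := by
  have h := (Equiv.addRight (1 : ℤ)).hasSum_iff.mpr (hasSum_theta3 hq0 hq1)
  have key : ((fun n : ℤ => q ^ ((n : ℝ) ^ 2)) ∘ ⇑(Equiv.addRight (1 : ℤ)))
      = fun n : ℤ => q ^ (((n : ℝ) + 1) ^ 2) := by
    funext n
    show q ^ (((n + 1 : ℤ) : ℝ) ^ 2) = q ^ (((n : ℝ) + 1) ^ 2)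
    norm_num
  rwa [key] at h

lemma theta2_pos (hq0 : 0 < q) (hq1 : q < 1) : 0 < theta2 q :=
  Summable.tsum_pos (summable_theta_term hq0 hq1 (by norm_num) (by norm_num))
    (fun n => (Real.rpow_pos_of_pos hq0 _).le) 0 (Real.rpow_pos_of_pos hq0 _)

lemma theta3_pos (hq0 : 0 < q) (hq1 : q < 1) : 0 < theta3 q :=
  Summable.tsum_pos (hasSum_theta3 hq0 hq1).summable
    (fun n => (Real.rpow_pos_of_pos hq0 _).le) 0 (Real.rpow_pos_of_pos hq0 _)

lemma rpow_two_mul (hq0 : 0 < q) (x : ℝ) : q ^ (2 * x) = (q ^ 2 : ℝ) ^ x := by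
  rw [← Real.rpow_natCast q 2, ← Real.rpow_mul hq0.le]
  norm_num

lemma theta3_landen (hq0 : 0 < q) (hq1 : q < 1) :
    theta3 q ^ 2 = theta3 (q ^ 2) ^ 2 + theta2 (q ^ 2) ^ 2 := by
  have hq20 : 0 < q ^ 2 := pow_pos hq0 2
  have hq21 : q ^ 2 < 1 := pow_lt_one₀ hq0.le hq1 two_ne_zero
  have hnn : ∀ x : ℝ, 0 ≤ q ^ x := fun x => (Real.rpow_pos_of_pos hq0 x).le
  have hnn2 : ∀ x : ℝ, 0 ≤ (q ^ 2 : ℝ) ^ x := fun x => (Real.rpow_pos_of_pos hq20 x).le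
  have hF : HasSum (fun p : ℤ × ℤ => q ^ ((p.1 : ℝ) ^ 2) * q ^ ((p.2 : ℝ) ^ 2))
      (theta3 q * theta3 q) := by
    exact_mod_cast hasSum_prod_mul (hasSum_theta3 hq0 hq1) (hasSum_theta3 hq0 hq1)
      (fun n => hnn _) (fun n => hnn _)
  have b0 : HasSum (fun st : ℤ × ℤ =>
      q ^ (((st.1 + st.2 : ℤ) : ℝ) ^ 2) * q ^ (((st.1 - st.2 : ℤ) : ℝ) ^ 2))
      (theta3 (q ^ 2) * theta3 (q ^ 2)) := by
    have base := hasSum_prod_mul (hasSum_theta3 hq20 hq21) (hasSum_theta3 hq20 hq21)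
      (fun n => hnn2 _) (fun n => hnn2 _)
    have key : (fun st : ℤ × ℤ =>
        q ^ (((st.1 + st.2 : ℤ) : ℝ) ^ 2) * q ^ (((st.1 - st.2 : ℤ) : ℝ) ^ 2))
        = fun st : ℤ × ℤ => (q ^ 2 : ℝ) ^ ((st.1 : ℝ) ^ 2) * (q ^ 2 : ℝ) ^ ((st.2 : ℝ) ^ 2) := by
      funext st
      rw [← rpow_two_mul hq0, ← rpow_two_mul hq0, ← Real.rpow_add hq0, ← Real.rpow_add hq0]
      congr 1
      push_cast
      ring
    rw [key]
    exact_mod_cast base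
  have b1 : HasSum (fun st : ℤ × ℤ =>
      q ^ (((st.1 + st.2 + 1 : ℤ) : ℝ) ^ 2) * q ^ (((st.1 - st.2 : ℤ) : ℝ) ^ 2))
      (theta2 (q ^ 2) * theta2 (q ^ 2)) := by
    have base := hasSum_prod_mul (hasSum_theta2 hq20 hq21) (hasSum_theta2 hq20 hq21)
      (fun n => hnn2 _) (fun n => hnn2 _)
    have key : (fun st : ℤ × ℤ =>
        q ^ (((st.1 + st.2 + 1 : ℤ) : ℝ) ^ 2) * q ^ (((st.1 - st.2 : ℤ) : ℝ) ^ 2))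
        = fun st : ℤ × ℤ => (q ^ 2 : ℝ) ^ (((st.1 : ℝ) + 1 / 2) ^ 2)
            * (q ^ 2 : ℝ) ^ (((st.2 : ℝ) + 1 / 2) ^ 2) := by
      funext st
      rw [← rpow_two_mul hq0, ← rpow_two_mul hq0, ← Real.rpow_add hq0, ← Real.rpow_add hq0]
      congr 1
      push_cast
      ring
    rw [key]
    exact_mod_cast base
  have hsplit := hasSum_split
    (fun p : ℤ × ℤ => q ^ ((p.1 : ℝ) ^ 2) * q ^ ((p.2 : ℝ) ^ 2)) (by exact_mod_cast b0)
    (by exact_mod_cast b1)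
  have huniq := hF.unique hsplit
  linear_combination huniq

lemma theta2_landen (hq0 : 0 < q) (hq1 : q < 1) :
    theta2 q ^ 2 = 2 * theta2 (q ^ 2) * theta3 (q ^ 2) := by
  have hq20 : 0 < q ^ 2 := pow_pos hq0 2
  have hq21 : q ^ 2 < 1 := pow_lt_one₀ hq0.le hq1 two_ne_zero
  have hnn : ∀ x : ℝ, 0 ≤ q ^ x := fun x => (Real.rpow_pos_of_pos hq0 x).le
  have hnn2 : ∀ x : ℝ, 0 ≤ (q ^ 2 : ℝ) ^ x := fun x => (Real.rpow_pos_of_pos hq20 x).le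
  have hF : HasSum (fun p : ℤ × ℤ => q ^ (((p.1 : ℝ) + 1 / 2) ^ 2) * q ^ (((p.2 : ℝ) + 1 / 2) ^ 2))
      (theta2 q * theta2 q) := by
    exact_mod_cast hasSum_prod_mul (hasSum_theta2 hq0 hq1) (hasSum_theta2 hq0 hq1)
      (fun n => hnn _) (fun n => hnn _)
  have b0 : HasSum (fun st : ℤ × ℤ =>
      q ^ ((((st.1 + st.2 : ℤ) : ℝ) + 1 / 2) ^ 2) * q ^ ((((st.1 - st.2 : ℤ) : ℝ) + 1 / 2) ^ 2))
      (theta2 (q ^ 2) * theta3 (q ^ 2)) := by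
    have base := hasSum_prod_mul (hasSum_theta2 hq20 hq21) (hasSum_theta3 hq20 hq21)
      (fun n => hnn2 _) (fun n => hnn2 _)
    have key : (fun st : ℤ × ℤ =>
        q ^ ((((st.1 + st.2 : ℤ) : ℝ) + 1 / 2) ^ 2) * q ^ ((((st.1 - st.2 : ℤ) : ℝ) + 1 / 2) ^ 2))
        = fun st : ℤ × ℤ => (q ^ 2 : ℝ) ^ (((st.1 : ℝ) + 1 / 2) ^ 2)
            * (q ^ 2 : ℝ) ^ ((st.2 : ℝ) ^ 2) := by
      funext st
      rw [← rpow_two_mul hq0, ← rpow_two_mul hq0, ← Real.rpow_add hq0, ← Real.rpow_add hq0]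
      congr 1
      push_cast
      ring
    rw [key]
    exact_mod_cast base
  have b1 : HasSum (fun st : ℤ × ℤ =>
      q ^ ((((st.1 + st.2 + 1 : ℤ) : ℝ) + 1 / 2) ^ 2)
        * q ^ ((((st.1 - st.2 : ℤ) : ℝ) + 1 / 2) ^ 2))
      (theta3 (q ^ 2) * theta2 (q ^ 2)) := by
    have base := hasSum_prod_mul (hasSum_theta3_shift hq20 hq21) (hasSum_theta2 hq20 hq21)
      (fun n => hnn2 _) (fun n => hnn2 _)
    have key : (fun st : ℤ × ℤ =>
        q ^ ((((st.1 + st.2 + 1 : ℤ) : ℝ) + 1 / 2) ^ 2)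
          * q ^ ((((st.1 - st.2 : ℤ) : ℝ) + 1 / 2) ^ 2))
        = fun st : ℤ × ℤ => (q ^ 2 : ℝ) ^ (((st.1 : ℝ) + 1) ^ 2)
            * (q ^ 2 : ℝ) ^ (((st.2 : ℝ) + 1 / 2) ^ 2) := by
      funext st
      rw [← rpow_two_mul hq0, ← rpow_two_mul hq0, ← Real.rpow_add hq0, ← Real.rpow_add hq0]
      congr 1
      push_cast
      ring
    rw [key]
    exact_mod_cast base
  have hsplit := hasSum_split
    (fun p : ℤ × ℤ => q ^ (((p.1 : ℝ) + 1 / 2) ^ 2) * q ^ (((p.2 : ℝ) + 1 / 2) ^ 2))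
    (by exact_mod_cast b0) (by exact_mod_cast b1)
  have huniq := hF.unique hsplit
  linear_combination huniq

lemma theta2_le_theta3 (hq0 : 0 < q) (hq1 : q < 1) : theta2 q ≤ theta3 q := by
  have h3 := theta3_landen hq0 hq1
  have h2 := theta2_landen hq0 hq1
  have key : theta3 q ^ 2 - theta2 q ^ 2 = (theta3 (q ^ 2) - theta2 (q ^ 2)) ^ 2 := by
    rw [h3, h2]; ring
  have p2 := theta2_pos hq0 hq1
  have p3 := theta3_pos hq0 hq1
  nlinarith [sq_nonneg (theta3 (q ^ 2) - theta2 (q ^ 2))]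


/-- Descending Landen transformation: for `0 < q < 1`, `0 ≤ k(q) ≤ 1` and
`k(q²)(1 + √(1 − k(q)²)) = 1 − √(1 − k(q)²)`. -/
theorem landen_transformation (q : ℝ) (hq0 : 0 < q) (hq1 : q < 1) :
    0 ≤ ellipticModulus q ∧ ellipticModulus q ≤ 1 ∧
    ellipticModulus (q ^ 2) * (1 + Real.sqrt (1 - ellipticModulus q ^ 2)) =
      1 - Real.sqrt (1 - ellipticModulus q ^ 2) := by
  have hq20 : 0 < q ^ 2 := pow_pos hq0 2
  have hq21 : q ^ 2 < 1 := pow_lt_one₀ hq0.le hq1 two_ne_zero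
  have h2p : 0 < theta2 (q ^ 2) := theta2_pos hq20 hq21
  have h3p : 0 < theta3 (q ^ 2) := theta3_pos hq20 hq21
  have hle : theta2 (q ^ 2) ≤ theta3 (q ^ 2) := theta2_le_theta3 hq20 hq21
  have h3q : 0 < theta3 q := theta3_pos hq0 hq1
  have h2q : 0 < theta2 q := theta2_pos hq0 hq1
  have hL3 := theta3_landen hq0 hq1
  have hL2 := theta2_landen hq0 hq1
  set a := theta2 (q ^ 2) with ha
  set b := theta3 (q ^ 2) with hb
  have hden : 0 < b ^ 2 + a ^ 2 := by positivity
  have hk : ellipticModulus q = 2 * a * b / (b ^ 2 + a ^ 2) := by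
    simp only [ellipticModulus]
    rw [hL2, hL3]
  have hk2 : ellipticModulus (q ^ 2) = a ^ 2 / b ^ 2 := by
    simp only [ellipticModulus]
    rfl
  have hba : 0 ≤ b ^ 2 - a ^ 2 := by nlinarith
  have hsq : 1 - ellipticModulus q ^ 2 = ((b ^ 2 - a ^ 2) / (b ^ 2 + a ^ 2)) ^ 2 := by
    rw [hk]
    field_simp
    ring
  have hsqrt : Real.sqrt (1 - ellipticModulus q ^ 2) = (b ^ 2 - a ^ 2) / (b ^ 2 + a ^ 2) := by
    rw [hsq, Real.sqrt_sq (div_nonneg hba hden.le)]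
  refine ⟨?_, ?_, ?_⟩
  · simp only [ellipticModulus]
    positivity
  · rw [hk, div_le_one hden]
    nlinarith [sq_nonneg (a - b)]
  · rw [hk2, hsqrt]
    have hb0 : b ≠ 0 := ne_of_gt h3p
    have hden0 : b ^ 2 + a ^ 2 ≠ 0 := ne_of_gt hden
    field_simp
    ring
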